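/- For n ≥ 1 and x ∈ (0,1), B_n^{-1,-1}(e_2; x) = nx(nx+1)/(n(n+1)) > x². Consequently, for each f ∈ C[0,1], lim_{m→∞} (B_n^{-1,-1})^m f(x) = (1-x)f(0) + x f(1) uniformly on [0,1]. -/

import Mathlib

open MeasureTheory intervalIntegral Filter

/-- The Beta operator with Jacobi weights: `B_n^{α,β}(f;x)`. -/
noncomputable def Bop (n α β : ℝ) (f : ℝ → ℝ) (x : ℝ) : ℝ :=
  (∫ t in (0:ℝ)..1, t ^ (n * x + α) * (1 - t) ^ (n - n * x + β) * f t) /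
  (∫ t in (0:ℝ)..1, t ^ (n * x + α) * (1 - t) ^ (n - n * x + β))

/-- The `m`-th central moment `T_{n,m}^{α,β}(x)`. -/
noncomputable def T (n α β : ℝ) (m : ℕ) (x : ℝ) : ℝ :=
  Bop n α β (fun t => (t - x) ^ m) x


/-- The Beta operator extended to the limiting cases `α = -1` (interpolation at `0`)
and `β = -1` (interpolation at `1`). -/
noncomputable def BopE (n α β : ℝ) (f : ℝ → ℝ) (x : ℝ) : ℝ :=
  if α = -1 ∧ x = 0 then f 0
  else if β = -1 ∧ x = 1 then f 1
  else Bop n α β f x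

/-- The `m`-th central moment of the extended Beta operator. -/
noncomputable def TE (n α β : ℝ) (m : ℕ) (x : ℝ) : ℝ :=
  BopE n α β (fun t => (t - x) ^ m) x
namespace BetaIter
open Real Set

noncomputable def w (a b t : ℝ) : ℝ := t ^ (a - 1) * (1 - t) ^ (b - 1)

noncomputable def J (a b : ℝ) : ℝ := ∫ t in (0:ℝ)..1, w a b t

lemma w_nonneg (a b : ℝ) {t : ℝ} (ht : t ∈ Icc (0:ℝ) 1) : 0 ≤ w a b t :=
  mul_nonneg (Real.rpow_nonneg ht.1 _) (Real.rpow_nonneg (by linarith [ht.2]) _)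

lemma w_eq_complex (a b : ℝ) {t : ℝ} (ht : t ∈ Icc (0:ℝ) 1) :
    ((w a b t : ℝ) : ℂ) = (t:ℂ) ^ ((a:ℂ) - 1) * (1 - (t:ℂ)) ^ ((b:ℂ) - 1) := by
  have h1 : ((a:ℂ) - 1) = ((a - 1 : ℝ) : ℂ) := by push_cast; ring
  have h2 : ((b:ℂ) - 1) = ((b - 1 : ℝ) : ℂ) := by push_cast; ring
  have h3 : ((1:ℂ) - (t:ℂ)) = ((1 - t : ℝ) : ℂ) := by push_cast; ring
  rw [w, h1, h2, h3, Complex.ofReal_mul,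
    Complex.ofReal_cpow ht.1, Complex.ofReal_cpow (by linarith [ht.2] : (0:ℝ) ≤ 1 - t)]

lemma w_intervalIntegrable {a b : ℝ} (ha : 0 < a) (hb : 0 < b) :
    IntervalIntegrable (w a b) volume 0 1 := by
  have h := Complex.betaIntegral_convergent (u := (a:ℂ)) (v := (b:ℂ)) (by simpa) (by simpa)
  rw [intervalIntegrable_iff_integrableOn_Ioc_of_le zero_le_one] at h ⊢
  have h2 : IntegrableOn
      (fun t : ℝ => ((t:ℂ) ^ ((a:ℂ) - 1) * (1 - (t:ℂ)) ^ ((b:ℂ) - 1)).re) (Ioc 0 1) volume := by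
    exact h.re
  exact h2.congr_fun
    (fun t ht => by dsimp only; rw [← w_eq_complex a b (Ioc_subset_Icc_self ht), Complex.ofReal_re])
    measurableSet_Ioc

lemma J_eq_Gamma {a b : ℝ} (ha : 0 < a) (hb : 0 < b) :
    J a b = Real.Gamma a * Real.Gamma b / Real.Gamma (a + b) := by
  have hcast : ((J a b : ℝ) : ℂ) = Complex.betaIntegral a b := by
    rw [J, ← intervalIntegral.integral_ofReal]
    exact intervalIntegral.integral_congr fun t ht =>
      w_eq_complex a b (by rwa [uIcc_of_le zero_le_one] at ht)
  have h := Complex.Gamma_mul_Gamma_eq_betaIntegral (s := (a:ℂ)) (t := (b:ℂ))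
    (by simpa) (by simpa)
  rw [← hcast, ← Complex.ofReal_add, Complex.Gamma_ofReal, Complex.Gamma_ofReal,
    Complex.Gamma_ofReal, ← Complex.ofReal_mul, ← Complex.ofReal_mul] at h
  have h' : Real.Gamma a * Real.Gamma b = Real.Gamma (a + b) * J a b := by exact_mod_cast h
  have hpos : 0 < Real.Gamma (a + b) := Real.Gamma_pos_of_pos (by linarith)
  rw [eq_div_iff hpos.ne']
  linarith [h']

lemma J_pos {a b : ℝ} (ha : 0 < a) (hb : 0 < b) : 0 < J a b := by
  rw [J_eq_Gamma ha hb]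
  exact div_pos (mul_pos (Real.Gamma_pos_of_pos ha) (Real.Gamma_pos_of_pos hb))
    (Real.Gamma_pos_of_pos (by linarith))

lemma J_succ {a b : ℝ} (ha : 0 < a) (hb : 0 < b) : J (a + 1) b = a / (a + b) * J a b := by
  have hab : (0:ℝ) < a + b := by linarith
  rw [J_eq_Gamma (by linarith) hb, J_eq_Gamma ha hb, Real.Gamma_add_one ha.ne',
    show a + 1 + b = (a + b) + 1 by ring, Real.Gamma_add_one hab.ne']
  have h1 := (Real.Gamma_pos_of_pos ha).ne'
  have h2 := (Real.Gamma_pos_of_pos hab).ne'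
  field_simp

lemma w_mul_t {a b : ℝ} (ha : 0 < a) {t : ℝ} (ht : t ∈ Icc (0:ℝ) 1) :
    w a b t * t = w (a + 1) b t := by
  have he : a + 1 - 1 = a := by ring
  rcases eq_or_lt_of_le ht.1 with h0 | h0
  · rw [w, w, ← h0, he, Real.zero_rpow ha.ne']
    ring
  · rw [w, w, he, show a = (a - 1) + 1 by ring, Real.rpow_add h0, Real.rpow_one]
    ring

lemma J_quad {a b : ℝ} (c0 c1 c2 : ℝ) (ha : 0 < a) (hb : 0 < b) :
    ∫ t in (0:ℝ)..1, w a b t * (c0 + c1 * t + c2 * t ^ 2)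
      = c0 * J a b + c1 * J (a+1) b + c2 * J (a+2) b := by
  have ha1 : (0:ℝ) < a + 1 := by linarith
  have key : EqOn (fun t => w a b t * (c0 + c1 * t + c2 * t ^ 2))
      (fun t => c0 * w a b t + c1 * w (a+1) b t + c2 * w (a+2) b t) (uIcc (0:ℝ) 1) := by
    intro t ht
    rw [uIcc_of_le zero_le_one] at ht
    have h1 := w_mul_t (b := b) ha ht
    have h2 := w_mul_t (b := b) ha1 ht
    simp only
    rw [show a + 2 = a + 1 + 1 by ring, ← h2, ← h1]
    ring
  rw [intervalIntegral.integral_congr key]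
  have i0 := w_intervalIntegrable ha hb
  have i1 := w_intervalIntegrable ha1 hb
  have i2 := w_intervalIntegrable (show (0:ℝ) < a + 2 by linarith) hb
  rw [intervalIntegral.integral_add ((i0.const_mul c0).add (i1.const_mul c1)) (i2.const_mul c2),
    intervalIntegral.integral_add (i0.const_mul c0) (i1.const_mul c1),
    intervalIntegral.integral_const_mul, intervalIntegral.integral_const_mul,
    intervalIntegral.integral_const_mul]
  rfl

lemma Bop_eq (N x : ℝ) (g : ℝ → ℝ) :
    Bop N (-1) (-1) g x =
      (∫ t in (0:ℝ)..1, w (N*x) (N - N*x) t * g t) / J (N*x) (N - N*x) := by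
  simp only [Bop, w, J, sub_eq_add_neg]

lemma Bop_quad {N x : ℝ} (hN : 1 ≤ N) (hx : x ∈ Ioo (0:ℝ) 1) (c0 c1 c2 : ℝ) (f : ℝ → ℝ)
    (hf : ∀ t, f t = c0 + c1 * t + c2 * t ^ 2) :
    Bop N (-1) (-1) f x = c0 + c1 * x + c2 * (x ^ 2 + x * (1 - x) / (N + 1)) := by
  have hN0 : (0:ℝ) < N := by linarith
  have ha : 0 < N * x := mul_pos hN0 hx.1
  have hb : 0 < N - N * x := by nlinarith [hx.2]
  have hJ := J_pos ha hb
  have h1 : J (N*x + 1) (N - N*x) = (N*x) / N * J (N*x) (N - N*x) := by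
    rw [J_succ ha hb, show N*x + (N - N*x) = N by ring]
  have h2 : J (N*x + 2) (N - N*x)
      = (N*x + 1) / (N + 1) * ((N*x) / N * J (N*x) (N - N*x)) := by
    rw [show N*x + 2 = (N*x + 1) + 1 by ring, J_succ (by linarith) hb,
      show N*x + 1 + (N - N*x) = N + 1 by ring, h1]
  have hnum : (∫ t in (0:ℝ)..1, w (N*x) (N - N*x) t * f t)
      = (c0 + c1 * x + c2 * (x ^ 2 + x * (1 - x) / (N + 1))) * J (N*x) (N - N*x) := by
    have : (fun t => w (N*x) (N - N*x) t * f t)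
        = fun t => w (N*x) (N - N*x) t * (c0 + c1 * t + c2 * t ^ 2) := by
      funext t; rw [hf]
    rw [this, J_quad c0 c1 c2 ha hb, h1, h2]
    field_simp
    ring
  rw [Bop_eq, hnum, mul_div_assoc, div_self hJ.ne', mul_one]

lemma Bop_mono {N x : ℝ} (hN : 1 ≤ N) (hx : x ∈ Ioo (0:ℝ) 1) {g h : ℝ → ℝ}
    (hgh : ∀ t ∈ Icc (0:ℝ) 1, g t ≤ h t)
    (hg : IntervalIntegrable (fun t => w (N*x) (N - N*x) t * g t) volume 0 1)
    (hh : IntervalIntegrable (fun t => w (N*x) (N - N*x) t * h t) volume 0 1) :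
    Bop N (-1) (-1) g x ≤ Bop N (-1) (-1) h x := by
  have hN0 : (0:ℝ) < N := by linarith
  have ha : 0 < N * x := mul_pos hN0 hx.1
  have hb : 0 < N - N * x := by nlinarith [hx.2]
  have hJ := J_pos ha hb
  rw [Bop_eq, Bop_eq]
  gcongr
  exact intervalIntegral.integral_mono_on zero_le_one hg hh fun t ht =>
    mul_le_mul_of_nonneg_left (hgh t ht) (w_nonneg _ _ ht)

lemma w_contOn (a b : ℝ) : ContinuousOn (w a b) (Ioo 0 1) := by
  intro t ht
  have h1 : ContinuousAt (fun s : ℝ => s ^ (a - 1)) t :=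
    Real.continuousAt_rpow_const t (a - 1) (Or.inl ht.1.ne')
  have h2 : ContinuousAt (fun s : ℝ => (1 - s) ^ (b - 1)) t := by
    have := (Real.continuousAt_rpow_const (1 - t) (b - 1)
      (Or.inl (by simp only [ne_eq, sub_eq_zero]; intro hh; linarith [ht.2]))).comp
      ((continuous_const.sub continuous_id).continuousAt (x := t))
    exact this
  exact (h1.mul h2).continuousWithinAt

lemma restrict_Ioc_eq : (volume : Measure ℝ).restrict (Ioo 0 1) = volume.restrict (Ioc 0 1) :=
  Measure.restrict_congr_set Ioo_ae_eq_Ioc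

lemma w_aesm (a b : ℝ) : AEStronglyMeasurable (w a b) (volume.restrict (Ioc 0 1)) := by
  rw [← restrict_Ioc_eq]
  exact (w_contOn a b).aestronglyMeasurable measurableSet_Ioo

lemma intble_bounded {N x : ℝ} (hN : 1 ≤ N) (hx : x ∈ Ioo (0:ℝ) 1) {g : ℝ → ℝ}
    (hm : AEStronglyMeasurable g (volume.restrict (Ioc 0 1))) {C : ℝ}
    (hC : ∀ t ∈ Icc (0:ℝ) 1, |g t| ≤ C) :
    IntervalIntegrable (fun t => w (N*x) (N - N*x) t * g t) volume 0 1 := by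
  have hN0 : (0:ℝ) < N := by linarith
  have ha : 0 < N * x := mul_pos hN0 hx.1
  have hb : 0 < N - N * x := by nlinarith [hx.2]
  have hw := w_intervalIntegrable ha hb
  rw [intervalIntegrable_iff_integrableOn_Ioc_of_le zero_le_one] at hw ⊢
  refine Integrable.mono' (hw.const_mul C) ((w_aesm _ _).mul hm) ?_
  refine (ae_restrict_iff' measurableSet_Ioc).2 (ae_of_all _ fun t ht => ?_)
  have htI : t ∈ Icc (0:ℝ) 1 := Ioc_subset_Icc_self ht
  have hw0 := w_nonneg (N*x) (N - N*x) htI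
  rw [Real.norm_eq_abs, abs_mul, abs_of_nonneg hw0, mul_comm C]
  exact mul_le_mul_of_nonneg_left (hC t htI) hw0

lemma num_sm (N : ℝ) (ψ : ℝ → ℝ) (hψ : StronglyMeasurable ψ) :
    StronglyMeasurable (fun x => ∫ t in (0:ℝ)..1, w (N*x) (N - N*x) t * ψ t) := by
  set G : ℝ × ℝ → ℝ := (univ ×ˢ Ioo (0:ℝ) 1).indicator
    (fun p => (Real.exp ((N*p.1 - 1) * Real.log p.2) *
      Real.exp ((N - N*p.1 - 1) * Real.log (1 - p.2))) * ψ p.2) with hG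
  have hGm : StronglyMeasurable G := by
    apply Measurable.stronglyMeasurable
    apply Measurable.indicator
    · exact ((((measurable_fst.const_mul N).sub measurable_const).mul
        (Real.measurable_log.comp measurable_snd)).exp.mul
        (((measurable_const.sub (measurable_fst.const_mul N)).sub measurable_const).mul
          (Real.measurable_log.comp (measurable_const.sub measurable_snd))).exp).mul
        (hψ.measurable.comp measurable_snd)
    · exact MeasurableSet.univ.prod measurableSet_Ioo
  have h1 : ∀ x, (∫ t, G (x, t)) = ∫ t in (0:ℝ)..1, w (N*x) (N - N*x) t * ψ t := by
    intro x
    have hfun : (fun t => G (x, t))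
        = (Ioo (0:ℝ) 1).indicator (fun t => w (N*x) (N - N*x) t * ψ t) := by
      funext t
      by_cases ht : t ∈ Ioo (0:ℝ) 1
      · rw [hG, Set.indicator_of_mem (show (x,t) ∈ univ ×ˢ Ioo (0:ℝ) 1 from ⟨mem_univ _, ht⟩),
          Set.indicator_of_mem ht, w, Real.rpow_def_of_pos ht.1,
          Real.rpow_def_of_pos (by linarith [ht.2] : (0:ℝ) < 1 - t)]
        ring_nf
      · rw [hG, Set.indicator_of_notMem (show (x,t) ∉ univ ×ˢ Ioo (0:ℝ) 1 from
          fun hmem => ht hmem.2), Set.indicator_of_notMem ht]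
    rw [hfun, MeasureTheory.integral_indicator measurableSet_Ioo, setIntegral_congr_set (μ := volume) Ioo_ae_eq_Ioc,
      intervalIntegral.integral_of_le zero_le_one]
  have h2 : StronglyMeasurable fun x : ℝ => ∫ t : ℝ, G (x, t) := hGm.integral_prod_right'
  have h3 : (fun x => ∫ t, G (x, t)) = fun x => ∫ t in (0:ℝ)..1, w (N*x) (N - N*x) t * ψ t :=
    funext h1
  rw [← h3]
  exact h2

lemma BopE_aesm {N : ℝ} (hN : 1 ≤ N) {g : ℝ → ℝ}
    (hm : AEStronglyMeasurable g (volume.restrict (Ioc 0 1))) :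
    AEStronglyMeasurable (fun x => BopE N (-1) (-1) g x) (volume.restrict (Ioc 0 1)) := by
  set g' := hm.mk g with hg'
  have hae : g =ᵐ[volume.restrict (Ioc 0 1)] g' := hm.ae_eq_mk
  have hnum : ∀ x, (∫ t in (0:ℝ)..1, w (N*x) (N - N*x) t * g t)
      = ∫ t in (0:ℝ)..1, w (N*x) (N - N*x) t * g' t := by
    intro x
    rw [intervalIntegral.integral_of_le zero_le_one, intervalIntegral.integral_of_le zero_le_one]
    exact integral_congr_ae (hae.mono fun t ht => by dsimp only; rw [ht])
  have hden_sm : StronglyMeasurable (fun x => J (N*x) (N - N*x)) := by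
    have := num_sm N (fun _ => 1) stronglyMeasurable_const
    simpa [J] using this
  set F : ℝ → ℝ := fun x =>
    (∫ t in (0:ℝ)..1, w (N*x) (N - N*x) t * g' t) / J (N*x) (N - N*x) with hF
  have hFsm : StronglyMeasurable F :=
    ((num_sm N g' hm.stronglyMeasurable_mk).measurable.div hden_sm.measurable).stronglyMeasurable
  refine hFsm.aestronglyMeasurable.congr ?_
  rw [← restrict_Ioc_eq]
  refine (ae_restrict_iff' measurableSet_Ioo).2 (ae_of_all _ fun x hx => ?_)
  rw [hF]
  simp only
  rw [← hnum, ← Bop_eq, BopE, if_neg (fun hc => hx.1.ne' hc.2), if_neg (fun hc => hx.2.ne hc.2)]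

lemma bound_aux {g : ℝ → ℝ} (hg : ContinuousOn g (Icc 0 1)) (h0 : g 0 = 0) (h1 : g 1 = 0)
    {ε : ℝ} (hε : 0 < ε) :
    ∃ M : ℝ, 0 ≤ M ∧ ∀ t ∈ Icc (0:ℝ) 1, |g t| ≤ ε + M * (t * (1 - t)) := by
  obtain ⟨C, hC⟩ := (isCompact_Icc (a := (0:ℝ)) (b := 1)).exists_bound_of_continuousOn hg
  have hC0 : 0 ≤ C := le_trans (norm_nonneg _) (hC 0 (by norm_num))
  have hc0 := hg 0 (by norm_num)
  rw [Metric.continuousWithinAt_iff] at hc0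
  obtain ⟨δ0, hδ0, hd0⟩ := hc0 ε hε
  have hc1 := hg 1 (by norm_num)
  rw [Metric.continuousWithinAt_iff] at hc1
  obtain ⟨δ1, hδ1, hd1⟩ := hc1 ε hε
  set δ := min (min δ0 δ1) (1/2) with hδdef
  have hδ : 0 < δ := lt_min (lt_min hδ0 hδ1) (by norm_num)
  have hδhalf : δ ≤ 1/2 := min_le_right _ _
  refine ⟨C / (δ * δ), by positivity, ?_⟩
  intro t ht
  have hφ : 0 ≤ t * (1 - t) := mul_nonneg ht.1 (by linarith [ht.2])
  have hMφ : 0 ≤ C / (δ * δ) * (t * (1 - t)) := by positivity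
  rcases lt_or_ge t δ with h | h
  · have hdist : dist t 0 < δ0 := by
      rw [Real.dist_eq, sub_zero, abs_of_nonneg ht.1]
      exact lt_of_lt_of_le h (le_trans (min_le_left _ _) (min_le_left _ _))
    have := hd0 ht hdist
    rw [Real.dist_eq, h0, sub_zero] at this
    linarith
  rcases lt_or_ge (1 - δ) t with h' | h'
  · have hdist : dist t 1 < δ1 := by
      rw [Real.dist_eq, abs_of_nonpos (by linarith [ht.2]), neg_sub]
      have : δ ≤ δ1 := le_trans (min_le_left _ _) (min_le_right _ _)
      linarith
    have := hd1 ht hdist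
    rw [Real.dist_eq, h1, sub_zero] at this
    linarith
  · have h2 : δ * δ ≤ t * (1 - t) :=
      mul_le_mul h (by linarith) hδ.le (by linarith)
    have h3 : |g t| ≤ C := by
      have := hC t ht; rwa [Real.norm_eq_abs] at this
    have h4 : C ≤ C / (δ * δ) * (t * (1 - t)) := by
      rw [div_mul_eq_mul_div, le_div_iff₀ (by positivity)]
      nlinarith
    linarith

end BetaIter

set_option maxHeartbeats 1000000 in
theorem iterates_minus_one_minus_one (n : ℕ) (hn : 1 ≤ n) :
    (∀ x ∈ Set.Ioo (0:ℝ) 1,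
      BopE n (-1) (-1) (fun t => t ^ 2) x = n * x * (n * x + 1) / (n * (n + 1)) ∧
        x ^ 2 < BopE n (-1) (-1) (fun t => t ^ 2) x) ∧
    ∀ f : ℝ → ℝ, ContinuousOn f (Set.Icc (0:ℝ) 1) →
      TendstoUniformlyOn (fun (m : ℕ) (x : ℝ) => (BopE n (-1) (-1))^[m] f x)
        (fun x => (1 - x) * f 0 + x * f 1) atTop (Set.Icc (0:ℝ) 1) := by
  classical
  set N : ℝ := (n : ℝ) with hNdef
  have hN : (1:ℝ) ≤ N := by rw [hNdef]; exact_mod_cast hn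
  have hN0 : (0:ℝ) < N := by linarith
  constructor
  · intro x hx
    have hBopE : BopE N (-1) (-1) (fun t => t ^ 2) x = Bop N (-1) (-1) (fun t => t ^ 2) x := by
      rw [BopE, if_neg (fun hc => hx.1.ne' hc.2), if_neg (fun hc => hx.2.ne hc.2)]
    have hq := BetaIter.Bop_quad hN hx 0 0 1 (fun t => t ^ 2) (fun t => by ring)
    have hd : 0 < x * (1 - x) / (N + 1) :=
      div_pos (mul_pos hx.1 (by linarith [hx.2])) (by linarith)
    constructor
    · rw [hBopE, hq]
      field_simp
      ring
    · rw [hBopE, hq]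
      nlinarith [hd]
  · intro f hf
    set B : (ℝ → ℝ) → ℝ → ℝ := BopE N (-1) (-1) with hB
    set ℓ : ℝ → ℝ := fun x => (1 - x) * f 0 + x * f 1 with hl
    set q : ℝ := N / (N + 1) with hqdef
    have hq0 : 0 ≤ q := by rw [hqdef]; positivity
    have hq1 : q < 1 := by rw [hqdef, div_lt_one (by linarith)]; linarith
    rw [Metric.tendstoUniformlyOn_iff]
    intro ε hε
    obtain ⟨M, hM0, hMb⟩ := BetaIter.bound_aux (g := fun t => f t - ℓ t)
      (hf.sub (Continuous.continuousOn (by rw [hl]; exact (continuous_const.sub continuous_id).mul continuous_const |>.add (continuous_id.mul continuous_const))))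
      (by simp [hl]) (by simp [hl]) (half_pos hε)
    have key : ∀ m : ℕ,
        AEStronglyMeasurable (B^[m] f) (volume.restrict (Set.Ioc 0 1)) ∧
        ∀ x ∈ Set.Icc (0:ℝ) 1, |B^[m] f x - ℓ x| ≤ ε/2 + M * q^m * (x * (1-x)) := by
      intro m
      induction m with
      | zero =>
        constructor
        · rw [Function.iterate_zero_apply]
          exact (hf.aestronglyMeasurable measurableSet_Icc).mono_measure
            (Measure.restrict_mono Set.Ioc_subset_Icc_self le_rfl)
        · intro x hx
          rw [Function.iterate_zero_apply]
          simpa using hMb x hx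
      | succ m ih =>
        obtain ⟨ihm, ihb⟩ := ih
        have hstep : B^[m+1] f = B (B^[m] f) := Function.iterate_succ_apply' B m f
        set h : ℝ → ℝ := B^[m] f with hh
        set c : ℝ := M * q ^ m with hcdef
        have hqm0 : 0 ≤ c := by rw [hcdef]; exact mul_nonneg hM0 (pow_nonneg hq0 m)
        have hqm1 : c ≤ M := by
          rw [hcdef]
          nlinarith [pow_le_one₀ hq0 hq1.le (n := m)]
        have hℓb : ∀ t ∈ Set.Icc (0:ℝ) 1, |ℓ t| ≤ |f 0| + |f 1| := by
          intro t htI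
          rw [hl]
          refine le_trans (abs_add_le _ _) ?_
          rw [abs_mul, abs_mul, abs_of_nonneg (by linarith [htI.2] : (0:ℝ) ≤ 1 - t),
            abs_of_nonneg htI.1]
          nlinarith [htI.1, htI.2, abs_nonneg (f 0), abs_nonneg (f 1)]
        have hhC : ∀ t ∈ Set.Icc (0:ℝ) 1, |h t| ≤ |f 0| + |f 1| + ε/2 + M := by
          intro t htI
          have h1 := ihb t htI
          have h2 := hℓb t htI
          have hφ1 : t * (1-t) ≤ 1 := by nlinarith [htI.1, htI.2]
          have hφ0 : 0 ≤ t * (1-t) := mul_nonneg htI.1 (by linarith [htI.2])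
          have h3 : |h t| ≤ |h t - ℓ t| + |ℓ t| := by
            calc |h t| = |(h t - ℓ t) + ℓ t| := by ring_nf
            _ ≤ _ := abs_add_le _ _
          nlinarith [h1, h2, h3]
        constructor
        · rw [hstep, hB]
          exact BetaIter.BopE_aesm hN ihm
        · intro x hx
          rw [hstep]
          rcases eq_or_lt_of_le hx.1 with hx0 | hx0
          · have hB0 : B h 0 = h 0 := by rw [hB]; simp [BopE]
            rw [← hx0, hB0]
            have h00 := ihb 0 ⟨le_refl 0, by norm_num⟩
            simp only [mul_zero, sub_zero, mul_one, zero_mul] at h00 ⊢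
            simpa using h00
          rcases eq_or_lt_of_le hx.2 with hx1 | hx1
          · have hB1 : B h 1 = h 1 := by rw [hB]; simp [BopE]
            rw [hx1, hB1]
            have h11 := ihb 1 ⟨by norm_num, le_refl 1⟩
            simpa using h11
          · have hxI : x ∈ Set.Ioo (0:ℝ) 1 := ⟨hx0, hx1⟩
            have hBop : B h x = Bop N (-1) (-1) h x := by
              rw [hB, BopE, if_neg (fun hc => hx0.ne' hc.2), if_neg (fun hc => hx1.ne hc.2)]
            have ha : 0 < N * x := mul_pos hN0 hxI.1
            have hb : 0 < N - N * x := by nlinarith [hxI.2]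
            have hu := BetaIter.Bop_quad hN hxI (f 0 + ε/2) ((f 1 - f 0) + c) (-c)
              (fun t => (f 0 + ε/2) + ((f 1 - f 0) + c) * t + (-c) * t^2) (fun t => rfl)
            have hlo := BetaIter.Bop_quad hN hxI (f 0 - ε/2) ((f 1 - f 0) - c) c
              (fun t => (f 0 - ε/2) + ((f 1 - f 0) - c) * t + c * t^2) (fun t => rfl)
            have hint_h : IntervalIntegrable
                (fun t => BetaIter.w (N*x) (N - N*x) t * h t) volume 0 1 :=
              BetaIter.intble_bounded hN hxI ihm hhC
            have hint_u : IntervalIntegrable (fun t => BetaIter.w (N*x) (N - N*x) t *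
                ((f 0 + ε/2) + ((f 1 - f 0) + c) * t + (-c) * t^2)) volume 0 1 :=
              (BetaIter.w_intervalIntegrable ha hb).mul_continuousOn
                (Continuous.continuousOn ((continuous_const.add
                  (continuous_const.mul continuous_id)).add
                  (continuous_const.mul (continuous_pow 2))))
            have hint_l : IntervalIntegrable (fun t => BetaIter.w (N*x) (N - N*x) t *
                ((f 0 - ε/2) + ((f 1 - f 0) - c) * t + c * t^2)) volume 0 1 :=
              (BetaIter.w_intervalIntegrable ha hb).mul_continuousOn
                (Continuous.continuousOn ((continuous_const.add
                  (continuous_const.mul continuous_id)).add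
                  (continuous_const.mul (continuous_pow 2))))
            have hub : ∀ t ∈ Set.Icc (0:ℝ) 1,
                h t ≤ (f 0 + ε/2) + ((f 1 - f 0) + c) * t + (-c) * t^2 := by
              intro t htI
              have h1 := (abs_le.1 (ihb t htI)).2
              have he : (f 0 + ε/2) + ((f 1 - f 0) + c) * t + (-c) * t^2
                  = ℓ t + ε/2 + c * (t * (1-t)) := by simp only [hl]; ring
              rw [he]
              linarith
            have hlb : ∀ t ∈ Set.Icc (0:ℝ) 1,
                (f 0 - ε/2) + ((f 1 - f 0) - c) * t + c * t^2 ≤ h t := by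
              intro t htI
              have h1 := (abs_le.1 (ihb t htI)).1
              have he : (f 0 - ε/2) + ((f 1 - f 0) - c) * t + c * t^2
                  = ℓ t - ε/2 - c * (t * (1-t)) := by simp only [hl]; ring
              rw [he]
              linarith
            have hval_u : (f 0 + ε/2) + ((f 1 - f 0) + c) * x
                + (-c) * (x ^ 2 + x * (1 - x) / (N + 1))
                = ℓ x + ε/2 + M * q^(m+1) * (x * (1-x)) := by
              simp only [hl, hcdef, hqdef, pow_succ]
              field_simp
              ring
            have hval_l : (f 0 - ε/2) + ((f 1 - f 0) - c) * x
                + c * (x ^ 2 + x * (1 - x) / (N + 1))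
                = ℓ x - ε/2 - M * q^(m+1) * (x * (1-x)) := by
              simp only [hl, hcdef, hqdef, pow_succ]
              field_simp
              ring
            have hle : B h x ≤ ℓ x + ε/2 + M * q^(m+1) * (x * (1-x)) := by
              rw [hBop, ← hval_u, ← hu]
              exact BetaIter.Bop_mono hN hxI hub hint_h hint_u
            have hge : ℓ x - ε/2 - M * q^(m+1) * (x * (1-x)) ≤ B h x := by
              rw [hBop, ← hval_l, ← hlo]
              exact BetaIter.Bop_mono hN hxI hlb hint_l hint_h
            exact abs_le.2 ⟨by linarith, by linarith⟩
    have hq2 : Tendsto (fun m : ℕ => M * q ^ m) atTop (nhds 0) := by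
      have := (tendsto_pow_atTop_nhds_zero_of_lt_one hq0 hq1).const_mul M
      simpa using this
    filter_upwards [hq2.eventually (gt_mem_nhds (half_pos hε))] with m hm x hx
    have hbd := (key m).2 x hx
    have hφ1 : x * (1-x) ≤ 1 := by nlinarith [hx.1, hx.2]
    have hφ0 : 0 ≤ x * (1-x) := mul_nonneg hx.1 (by linarith [hx.2])
    have hqm0 : 0 ≤ M * q ^ m := mul_nonneg hM0 (pow_nonneg hq0 m)
    rw [Real.dist_eq, abs_sub_comm]
    have h5 : M * q^m * (x*(1-x)) ≤ M * q^m := by nlinarith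
    calc |B^[m] f x - ℓ x| ≤ ε/2 + M*q^m*(x*(1-x)) := hbd
    _ < ε := by linarith [hm]
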